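/- If J is a monomial ideal of Borel type in k[x_1,...,x_n], then for every i the colon ideal J : x_i^∞ is also a monomial ideal of Borel type. -/

import Mathlib

open MvPolynomial Finsupp Module

namespace Paper

variable {k : Type*} [Field k] {n : ℕ}

/-- `J` is a monomial ideal: generated by a set of monomials. -/
def IsMonomialIdeal (J : Ideal (MvPolynomial (Fin n) k)) : Prop :=
  ∃ G : Set (Fin n →₀ ℕ),
    J = Ideal.span ((fun d => (monomial d (1:k) : MvPolynomial (Fin n) k)) '' G)

/-- The Borel-type condition: for `i < j` and a monomial `x^d ∈ J` with `x_j ∣ x^d`,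
some `x_i^s · x^d / x_j` lies in `J`. -/
def BorelCond (J : Ideal (MvPolynomial (Fin n) k)) : Prop :=
  ∀ i j : Fin n, i < j → ∀ d : Fin n →₀ ℕ,
    (monomial d (1:k) : MvPolynomial (Fin n) k) ∈ J → d j ≠ 0 →
    ∃ s : ℕ,
      (monomial (d + Finsupp.single i s - Finsupp.single j 1) (1:k) :
        MvPolynomial (Fin n) k) ∈ J

/-- `J` is a monomial ideal of Borel type. -/
def IsBorelType (J : Ideal (MvPolynomial (Fin n) k)) : Prop :=
  IsMonomialIdeal J ∧ BorelCond J

/-- The saturation `J : I^∞`. -/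
noncomputable def sat (J I : Ideal (MvPolynomial (Fin n) k)) : Ideal (MvPolynomial (Fin n) k) :=
  ⨆ m : ℕ, Submodule.colon J ((I ^ m) : Ideal (MvPolynomial (Fin n) k))

/-- The product of the variables with (0-based) index `≥ r`, i.e. `x_{r+1} ⋯ x_n`. -/
noncomputable def tailProd (k : Type*) [Field k] (n r : ℕ) : MvPolynomial (Fin n) k :=
  ∏ i ∈ Finset.univ.filter (fun i : Fin n => r ≤ (i : ℕ)), X i

/-- `Φ_r(J) = J : (x_{r+1} ⋯ x_n)^∞`. -/
noncomputable def Phi (r : ℕ) (J : Ideal (MvPolynomial (Fin n) k)) :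
    Ideal (MvPolynomial (Fin n) k) :=
  sat J (Ideal.span {tailProd k n r})

/-- The projection `Π_r : k[x_1,…,x_n] → k[x_1,…,x_r]` sending `x_{r+1},…,x_n` to `0`. -/
noncomputable def projDown (k : Type*) [Field k] (n r : ℕ) :
    MvPolynomial (Fin n) k →ₐ[k] MvPolynomial (Fin r) k :=
  aeval (fun i : Fin n => if h : (i : ℕ) < r then X ⟨i, h⟩ else 0)

/-- `Π_r(J)`, the image ideal of `J` in `k[x_1,…,x_r]`. -/
noncomputable def PiIdeal (r : ℕ) (J : Ideal (MvPolynomial (Fin n) k)) :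
    Ideal (MvPolynomial (Fin r) k) :=
  J.map (projDown k n r).toRingHom

/-- The exponent `d` is a minimal generator of the monomial ideal `J`. -/
def IsMinGen (J : Ideal (MvPolynomial (Fin n) k)) (d : Fin n →₀ ℕ) : Prop :=
  (monomial d (1:k) : MvPolynomial (Fin n) k) ∈ J ∧
    ∀ d' : Fin n →₀ ℕ, d' ≤ d →
      (monomial d' (1:k) : MvPolynomial (Fin n) k) ∈ J → d' = d

/-- The leading exponent of a polynomial with respect to a monomial order. -/
noncomputable def leadExp (m : MonomialOrder (Fin n)) (f : MvPolynomial (Fin n) k) :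
    Fin n →₀ ℕ :=
  m.toSyn.symm (f.support.sup fun d => m.toSyn d)

/-- The initial ideal of `P` with respect to the monomial order `m`. -/
noncomputable def initialIdeal (m : MonomialOrder (Fin n)) (P : Ideal (MvPolynomial (Fin n) k)) :
    Ideal (MvPolynomial (Fin n) k) :=
  Ideal.span {g | ∃ f ∈ P, f ≠ 0 ∧ g = (monomial (leadExp m f) (1:k) : MvPolynomial (Fin n) k)}

/-- A homogeneous ideal: closed under taking homogeneous components. -/
def IsHomogIdeal (P : Ideal (MvPolynomial (Fin n) k)) : Prop :=
  ∀ f ∈ P, ∀ i : ℕ, homogeneousComponent i f ∈ P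

/-- The ideal generated by the variables `x_1, …, x_{i+1}` (0-based indices `≤ i`). -/
noncomputable def varIdealLe (k : Type*) [Field k] {n : ℕ} (i : Fin n) :
    Ideal (MvPolynomial (Fin n) k) :=
  Ideal.span ((fun j : Fin n => (X j : MvPolynomial (Fin n) k)) '' {j | j ≤ i})

/-- The Hilbert series of `S/I` as a power series with integer coefficients. -/
noncomputable def hilb {N : ℕ} (I : Ideal (MvPolynomial (Fin N) k)) : PowerSeries ℤ :=
  PowerSeries.mk fun i =>
    (Module.finrank k (Submodule.map (Ideal.Quotient.mkₐ k I).toLinearMap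
      (homogeneousSubmodule (Fin N) k i)) : ℤ)

/-- The `i`-th Hilbert coefficient read off from the numerator polynomial `q`:
the coefficient of `(t-1)^i` in `q`. -/
noncomputable def hc (q : Polynomial ℤ) (i : ℕ) : ℤ :=
  (Polynomial.taylor 1 q).coeff i

/-- The Krull dimension of the quotient ring `S/I`. -/
noncomputable def qdim {N : ℕ} (I : Ideal (MvPolynomial (Fin N) k)) : WithBot (WithTop ℕ) :=
  ringKrullDim (MvPolynomial (Fin N) k ⧸ I)

/-- The embedding `k[x_1,…,x_r] → k[x_1,…,x_n]`. -/
noncomputable def inclUp (k : Type*) [Field k] {r n : ℕ} (h : r ≤ n) :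
    MvPolynomial (Fin r) k →ₐ[k] MvPolynomial (Fin n) k :=
  rename (Fin.castLE h)

/-- The embedding of variables for the tail subring `k[x_{r+1},…,x_n]`. -/
def tailEmb (n r : ℕ) (h : r ≤ n) : Fin (n - r) → Fin n :=
  fun j => ⟨r + j.1, by omega⟩

/-- The inclusion `k[x_{r+1},…,x_n] → k[x_1,…,x_n]` as a ring hom. -/
noncomputable def tailIncl (k : Type*) [Field k] {n : ℕ} (r : ℕ) (h : r ≤ n) :
    MvPolynomial (Fin (n - r)) k →+* MvPolynomial (Fin n) k :=
  (rename (tailEmb n r h)).toRingHom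

/-- `J₁ = (J ∩ k[x_1,…,x_r])S`: the ideal generated by the monomials of `J`
lying in `k[x_1,…,x_r]`. -/
noncomputable def Jone (r : ℕ) (J : Ideal (MvPolynomial (Fin n) k)) :
    Ideal (MvPolynomial (Fin n) k) :=
  Ideal.span {g | ∃ d : Fin n →₀ ℕ, (∀ i : Fin n, r ≤ (i : ℕ) → d i = 0) ∧
    (monomial d (1:k) : MvPolynomial (Fin n) k) ∈ J ∧
    g = (monomial d (1:k) : MvPolynomial (Fin n) k)}

/-- The quotient module `J₂/J₁` for ideals `J₁ ≤ J₂`. -/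
abbrev quotMod (J₁ J₂ : Ideal (MvPolynomial (Fin n) k)) :=
  (J₂ : Submodule (MvPolynomial (Fin n) k) (MvPolynomial (Fin n) k)) ⧸
    (Submodule.comap
      (J₂ : Submodule (MvPolynomial (Fin n) k) (MvPolynomial (Fin n) k)).subtype
      (J₁ : Submodule (MvPolynomial (Fin n) k) (MvPolynomial (Fin n) k)))

/-- `J₂/J₁` as a module over `k[x_{r+1},…,x_n]`. -/
noncomputable def quotModTail (r : ℕ) (h : r ≤ n) (J₁ J₂ : Ideal (MvPolynomial (Fin n) k)) :
    Module (MvPolynomial (Fin (n - r)) k) (quotMod J₁ J₂) :=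
  Module.compHom _ (tailIncl k r h)

/-- The degrevlex property of a monomial order: compare total degrees first, and break
ties by the *last* variable in which the exponents differ, where *larger* exponent
means *smaller* monomial. -/
def IsDegRevLex (m : MonomialOrder (Fin n)) : Prop :=
  ∀ a b : Fin n →₀ ℕ, (m.toSyn a < m.toSyn b) ↔
    ((a.sum fun _ e => e) < (b.sum fun _ e => e) ∨
      ((a.sum fun _ e => e) = (b.sum fun _ e => e) ∧
        ∃ i : Fin n, b i < a i ∧ ∀ j : Fin n, i < j → a j = b j))

end Paper

open Paper MvPolynomial

namespace Paper

variable {k : Type*} [Field k] {n : ℕ}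

lemma mem_sat_iff (J : Ideal (MvPolynomial (Fin n) k)) (g f : MvPolynomial (Fin n) k) :
    f ∈ sat J (Ideal.span {g}) ↔ ∃ m : ℕ, g ^ m * f ∈ J := by
  have hmono : Monotone (fun m : ℕ => Submodule.colon J ((Ideal.span {g} ^ m : Ideal (MvPolynomial (Fin n) k)) : Set (MvPolynomial (Fin n) k))) := by
    intro a b hab
    intro x hx
    simp only [Ideal.span_singleton_pow, Ideal.mem_colon_span_singleton] at hx ⊢
    obtain ⟨c, rfl⟩ := Nat.exists_eq_add_of_le hab
    rw [pow_add, ← mul_assoc]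
    exact J.mul_mem_right _ hx
  rw [sat, Submodule.mem_iSup_of_directed _ hmono.directed_le]
  simp only [Ideal.span_singleton_pow, Ideal.mem_colon_span_singleton]
  constructor
  · rintro ⟨m, h⟩; exact ⟨m, by rwa [mul_comm]⟩
  · rintro ⟨m, h⟩; exact ⟨m, by rwa [mul_comm]⟩

lemma monomial_mem_of_coeff_ne_zero {G : Set (Fin n →₀ ℕ)} {f : MvPolynomial (Fin n) k}
    (hf : f ∈ Ideal.span ((fun d => (monomial d (1:k) : MvPolynomial (Fin n) k)) '' G))
    {d : Fin n →₀ ℕ} (hd : coeff d f ≠ 0) :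
    (monomial d (1:k) : MvPolynomial (Fin n) k) ∈
      Ideal.span ((fun d => (monomial d (1:k) : MvPolynomial (Fin n) k)) '' G) := by
  obtain ⟨N, c, g, hsum⟩ := Submodule.mem_span_set'.mp hf
  rw [← hsum] at hd
  rw [coeff_sum] at hd
  obtain ⟨j, -, hj⟩ := Finset.exists_ne_zero_of_sum_ne_zero hd
  obtain ⟨e, heG, hge⟩ := (g j).2
  rw [smul_eq_mul, ← hge, coeff_mul_monomial'] at hj
  split_ifs at hj with hle
  · have : (monomial d (1:k) : MvPolynomial (Fin n) k)
        = monomial (d - e) (1:k) * monomial e (1:k) := by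
      rw [monomial_mul, one_mul, tsub_add_cancel_of_le hle]
    rw [this]
    exact Ideal.mul_mem_left _ _ (Ideal.subset_span ⟨e, heG, rfl⟩)
  · exact absurd rfl hj

lemma monomial_mem_sat_iff (J : Ideal (MvPolynomial (Fin n) k)) (i : Fin n) (d : Fin n →₀ ℕ) :
    (monomial d (1:k) : MvPolynomial (Fin n) k) ∈ sat J (Ideal.span {(X i : MvPolynomial (Fin n) k)})
      ↔ ∃ m : ℕ, (monomial (Finsupp.single i m + d) (1:k) : MvPolynomial (Fin n) k) ∈ J := by
  rw [mem_sat_iff]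
  apply exists_congr
  intro m
  rw [X_pow_eq_monomial, monomial_mul, one_mul]

end Paper


/-- If `J` is a monomial ideal of Borel type, then so is
`J : x_i^∞` for every variable `x_i`. -/
theorem stmt2 {k : Type*} [Field k] {n : ℕ}
    (J : Ideal (MvPolynomial (Fin n) k)) (hJ : IsBorelType J) (i : Fin n) :
    IsBorelType (sat J (Ideal.span {(X i : MvPolynomial (Fin n) k)})) := by
  obtain ⟨⟨G, hG⟩, hB⟩ := hJ
  constructor
  · refine ⟨{d | (monomial d (1:k) : MvPolynomial (Fin n) k) ∈
      sat J (Ideal.span {(X i : MvPolynomial (Fin n) k)})}, le_antisymm ?_ ?_⟩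
    · intro f hf
      obtain ⟨m, hm⟩ := (mem_sat_iff J _ f).mp hf
      rw [f.as_sum]
      apply Ideal.sum_mem
      intro v hv
      have hcv : coeff v f ≠ 0 := MvPolynomial.mem_support_iff.mp hv
      have h1 : coeff (Finsupp.single i m + v) (X i ^ m * f) ≠ 0 := by
        rw [X_pow_eq_monomial, coeff_monomial_mul, one_mul]; exact hcv
      have h2 : (monomial (Finsupp.single i m + v) (1:k) : MvPolynomial (Fin n) k) ∈ J := by
        rw [hG]
        exact monomial_mem_of_coeff_ne_zero (hG ▸ hm) h1
      have h3 : (monomial v (1:k) : MvPolynomial (Fin n) k) ∈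
          sat J (Ideal.span {(X i : MvPolynomial (Fin n) k)}) :=
        (monomial_mem_sat_iff J i v).mpr ⟨m, h2⟩
      have h4 : (monomial v (coeff v f) : MvPolynomial (Fin n) k)
          = C (coeff v f) * monomial v 1 := by rw [C_mul_monomial, mul_one]
      rw [h4]
      exact Ideal.mul_mem_left _ _ (Ideal.subset_span ⟨v, h3, rfl⟩)
    · rw [Ideal.span_le]
      rintro g ⟨d, hd, rfl⟩
      exact hd
  · intro a b hab d hdT hdb
    obtain ⟨m, hm⟩ := (monomial_mem_sat_iff J i d).mp hdT
    obtain ⟨s, hs⟩ := hB a b hab (Finsupp.single i m + d) hm (by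
      rw [Finsupp.add_apply]
      exact fun h => hdb (Nat.eq_zero_of_add_eq_zero_left h))
    refine ⟨s, (monomial_mem_sat_iff J i _).mpr ⟨m, ?_⟩⟩
    have hle : Finsupp.single b 1 ≤ d + Finsupp.single a s := by
      rw [Finsupp.single_le_iff, Finsupp.add_apply]
      exact le_trans (Nat.one_le_iff_ne_zero.mpr hdb) (Nat.le_add_right _ _)
    have heq : Finsupp.single i m + (d + Finsupp.single a s - Finsupp.single b 1)
        = Finsupp.single i m + d + Finsupp.single a s - Finsupp.single b 1 := by
      rw [← add_tsub_assoc_of_le hle, ← add_assoc]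
    rw [heq]
    exact hs
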